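/- Let s ≥ 1, let a : Fin s → ℝ with a i > 0 for all i, and let l be a real number with 0 ≤ l and 2l ≤ a i for all i. Then the Lebesgue measure (volume) of the chainlink polytope CL(ā,l) ⊆ ℝ^s equals trace(M_1 · M_2 ··· M_s), where M_i is the 2×2 real matrix [[a_i, −l²/2],[1, 0]]. -/

import Mathlib

open MeasureTheory Set Function
open scoped ENNReal

noncomputable section CLauxSec

namespace CLaux

/-- positive part -/
def pp (x : ℝ) : ℝ := max x 0

lemma pp_nonneg (x : ℝ) : 0 ≤ pp x := le_max_right _ _

lemma pp_of_nonpos {x : ℝ} (h : x ≤ 0) : pp x = 0 := max_eq_right h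

lemma continuous_pp : Continuous pp := continuous_id.max continuous_const

lemma cont_max_sub (c : ℝ) : Continuous fun u : ℝ => max (u - c) 0 :=
  (continuous_id.sub continuous_const).max continuous_const

lemma cont_max_sub' (c : ℝ) : Continuous fun u : ℝ => max (c - u) 0 :=
  (continuous_const.sub continuous_id).max continuous_const

lemma lemJ {v c e : ℝ} (hv : v ≤ c) (he : 0 ≤ e) :
    ∫ u in v..(c+e), max (u - c) 0 = e^2/2 := by
  have hInt : ∀ p q : ℝ, IntervalIntegrable (fun u => max (u - c) 0) volume p q :=
    fun p q => (cont_max_sub c).intervalIntegrable p q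
  have h1 : ∫ u in v..c, max (u - c) 0 = 0 := by
    rw [intervalIntegral.integral_congr (g := fun _ => (0:ℝ))]
    · simp
    · intro u hu
      rw [uIcc_of_le hv] at hu
      exact max_eq_right (by linarith [hu.2])
  have h2 : ∫ u in c..(c+e), max (u - c) 0 = e^2/2 := by
    rw [intervalIntegral.integral_congr (g := fun u => u - c)]
    · rw [intervalIntegral.integral_sub (f := fun u => u) (g := fun _ => c)
        ((continuous_id.intervalIntegrable _ _ : IntervalIntegrable (fun u : ℝ => u) volume _ _))
        (intervalIntegrable_const), integral_id, intervalIntegral.integral_const]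
      simp [smul_eq_mul]; ring
    · intro u hu
      rw [uIcc_of_le (by linarith)] at hu
      exact max_eq_left (by linarith [hu.1])
  have h3 := intervalIntegral.integral_add_adjacent_intervals (hInt v c) (hInt c (c+e))
  rw [h1, h2] at h3
  rw [← h3]; ring

lemma lemJ2 {l b : ℝ} (hl : 0 ≤ l) (hb : l ≤ b) :
    ∫ u in (0:ℝ)..b, max (l - u) 0 = l^2/2 := by
  have hInt : ∀ p q : ℝ, IntervalIntegrable (fun u => max (l - u) 0) volume p q :=
    fun p q => (cont_max_sub' l).intervalIntegrable p q
  have h1 : ∫ u in (0:ℝ)..l, max (l - u) 0 = l^2/2 := by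
    rw [intervalIntegral.integral_congr (g := fun u => l - u)]
    · rw [intervalIntegral.integral_sub (f := fun _ => l) (g := fun u => u)
        (intervalIntegrable_const)
        ((continuous_id.intervalIntegrable _ _ : IntervalIntegrable (fun u : ℝ => u) volume _ _)),
        integral_id, intervalIntegral.integral_const]
      simp [smul_eq_mul]; ring
    · intro u hu
      rw [uIcc_of_le hl] at hu
      exact max_eq_left (by linarith [hu.2])
  have h2 : ∫ u in l..b, max (l - u) 0 = 0 := by
    rw [intervalIntegral.integral_congr (g := fun _ => (0:ℝ))]
    · simp
    · intro u hu
      rw [uIcc_of_le hb] at hu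
      exact max_eq_right (by linarith [hu.1])
  have h3 := intervalIntegral.integral_add_adjacent_intervals (hInt 0 l) (hInt l b)
  rw [h1, h2] at h3
  rw [← h3]; ring

lemma core {l a' α β v : ℝ} (hl : 0 ≤ l) (ha' : 2*l ≤ a') (hβ : 0 ≤ β)
    (hαβ : l*β ≤ α) (hv : v ≤ l) :
    ∫⁻ t, (Set.indicator (Icc (0:ℝ) a')
        (fun u => ENNReal.ofReal (α - β * pp (u - (a' - l)))) t)
        * (if v ≤ t then 1 else 0)
    = ENNReal.ofReal (α * a' - β * (l^2/2) - α * pp v) := by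
  have hα : 0 ≤ α := le_trans (mul_nonneg hl hβ) hαβ
  have key : ∀ t : ℝ, (Set.indicator (Icc (0:ℝ) a')
        (fun u => ENNReal.ofReal (α - β * pp (u - (a' - l)))) t)
        * (if v ≤ t then 1 else 0)
      = Set.indicator (Icc (pp v) a')
        (fun u => ENNReal.ofReal (α - β * pp (u - (a' - l)))) t := by
    intro t
    by_cases h2 : v ≤ t <;> by_cases h0 : 0 ≤ t <;> by_cases hta : t ≤ a' <;>
      simp [Set.indicator_apply, mem_Icc, pp, max_le_iff, h2, h0, hta]
  rw [lintegral_congr key, lintegral_indicator measurableSet_Icc]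
  have hgc : Continuous fun u : ℝ => α - β * max (u - (a'-l)) 0 :=
    continuous_const.sub (continuous_const.mul (cont_max_sub _))
  have hi : IntegrableOn (fun u : ℝ => α - β * pp (u - (a' - l))) (Icc (pp v) a') volume :=
    hgc.integrableOn_Icc
  have hnn : 0 ≤ᵐ[volume.restrict (Icc (pp v) a')]
      fun u : ℝ => α - β * pp (u - (a' - l)) := by
    refine (ae_restrict_iff' measurableSet_Icc).2 (ae_of_all _ fun t ht => ?_)
    have h1 : pp (t - (a'-l)) ≤ l := max_le (by linarith [ht.2]) hl
    have h1' : 0 ≤ pp (t - (a'-l)) := pp_nonneg _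
    have : (0:ℝ) ≤ α - β * pp (t - (a'-l)) := by
      nlinarith [mul_le_mul_of_nonneg_left h1 hβ]
    simpa using this
  rw [← ofReal_integral_eq_lintegral_ofReal hi hnn]
  congr 1
  have hppv : pp v ≤ a' - l := le_trans (max_le hv hl) (by linarith)
  have hle : pp v ≤ a' := by linarith
  rw [MeasureTheory.integral_Icc_eq_integral_Ioc, ← intervalIntegral.integral_of_le hle]
  rw [intervalIntegral.integral_sub (f := fun _ => α) (g := fun u => β * pp (u - (a'-l)))
      (intervalIntegrable_const)
      ((continuous_const.mul (cont_max_sub _)).intervalIntegrable _ _),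
    intervalIntegral.integral_const_mul, intervalIntegral.integral_const]
  have hJ : ∫ u in (pp v)..a', pp (u - (a'-l)) = l^2/2 := by
    have h := lemJ (v := pp v) (c := a'-l) (e := l) hppv hl
    rw [show a' - l + l = a' from by ring] at h
    exact h
  rw [hJ]
  simp [smul_eq_mul]; ring

variable (s : ℕ) [NeZero s] (a : Fin s → ℝ) (l : ℝ)

lemma s_pos : 0 < s := Nat.pos_of_ne_zero (NeZero.ne s)

/-- natural number to `Fin s` -/
def fin' (m : ℕ) : Fin s := ⟨m % s, Nat.mod_lt _ (s_pos s)⟩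

lemma fin'_eq {m : ℕ} (hm : m < s) : fin' s m = ⟨m, hm⟩ := by
  simp [fin', Nat.mod_eq_of_lt hm]

/-- indicator factor for a single (cyclic) constraint -/
def eF (i : Fin s) (x : Fin s → ℝ) : ℝ≥0∞ :=
  if 0 ≤ x i ∧ x i ≤ a i ∧ x i - x (i + 1) ≤ a i - l then 1 else 0

/-- full indicator as a product -/
def fI (x : Fin s → ℝ) : ℝ≥0∞ := ∏ i, eF s a l i x

/-- transfer matrices, accumulated from the top index downwards. -/
def Rmat : ℕ → Matrix (Fin 2) (Fin 2) ℝ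
  | 0 => !![a (fin' s (s-1)), -1; 1, 0]
  | (j+1) => !![a (fin' s (s-2-j)), -(l^2/2); 1, 0] * Rmat j

def Af (j : ℕ) (r : ℝ) : ℝ := Rmat s a l j 0 0 + Rmat s a l j 0 1 * r
def Bf (j : ℕ) (r : ℝ) : ℝ := Rmat s a l j 1 0 + Rmat s a l j 1 1 * r

lemma Af_zero (r : ℝ) : Af s a l 0 r = a (fin' s (s-1)) - r := by
  simp [Af, Rmat]; ring

lemma Bf_zero (r : ℝ) : Bf s a l 0 r = 1 := by
  simp [Bf, Rmat]

lemma Af_succ (j : ℕ) (r : ℝ) :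
    Af s a l (j+1) r = a (fin' s (s-2-j)) * Af s a l j r - (l^2/2) * Bf s a l j r := by
  simp [Af, Bf, Rmat, Matrix.mul_apply, Fin.sum_univ_two]; ring

lemma Bf_succ (j : ℕ) (r : ℝ) : Bf s a l (j+1) r = Af s a l j r := by
  simp [Af, Bf, Rmat, Matrix.mul_apply, Fin.sum_univ_two]

lemma pos_Bf_Af (hl : 0 ≤ l) (h2 : ∀ i, 2*l ≤ a i) (j : ℕ) :
    ∀ r, 0 ≤ r → r ≤ l → 0 ≤ Bf s a l j r ∧ l * Bf s a l j r ≤ Af s a l j r := by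
  induction j with
  | zero =>
    intro r hr hrl
    rw [Af_zero, Bf_zero]
    constructor
    · norm_num
    · have := h2 (fin' s (s-1)); linarith
  | succ j ih =>
    intro r hr hrl
    obtain ⟨hB, hAB⟩ := ih r hr hrl
    have hA : 0 ≤ Af s a l j r := le_trans (mul_nonneg hl hB) hAB
    rw [Af_succ, Bf_succ]
    refine ⟨hA, ?_⟩
    have ha := h2 (fin' s (s-2-j))
    nlinarith [mul_le_mul_of_nonneg_left hAB hl, mul_nonneg (mul_nonneg hl hl) hB]

lemma Af_nonneg (hl : 0 ≤ l) (h2 : ∀ i, 2*l ≤ a i) (j : ℕ) {r : ℝ} (hr : 0 ≤ r) (hrl : r ≤ l) :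
    0 ≤ Af s a l j r :=
  le_trans (mul_nonneg hl (pos_Bf_Af s a l hl h2 j r hr hrl).1)
    (pos_Bf_Af s a l hl h2 j r hr hrl).2

lemma fcore (hl : 0 ≤ l) (h2 : ∀ i, 2*l ≤ a i) (j : ℕ) {a0 : ℝ} (ha0 : 2*l ≤ a0) :
    ∫⁻ t, (Set.indicator (Icc (0:ℝ) a0)
        (fun t => ENNReal.ofReal (Af s a l j (pp (l - t))
          - Bf s a l j (pp (l - t)) * pp (t - (a0 - l)))) t)
    = ENNReal.ofReal (a0 * Rmat s a l j 0 0 + (l^2/2) * Rmat s a l j 0 1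
        - (l^2/2) * Rmat s a l j 1 0) := by
  have hzero : ∀ t : ℝ, pp (l - t) * pp (t - (a0 - l)) = 0 := by
    intro t
    rcases le_total t l with h | h
    · rw [pp_of_nonpos (x := t - (a0-l)) (by linarith), mul_zero]
    · rw [pp_of_nonpos (x := l - t) (by linarith), zero_mul]
  have hg : ∀ t : ℝ, Af s a l j (pp (l - t)) - Bf s a l j (pp (l - t)) * pp (t - (a0 - l))
      = Rmat s a l j 0 0 + Rmat s a l j 0 1 * pp (l - t)
        - Rmat s a l j 1 0 * pp (t - (a0 - l)) := by
    intro t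
    have h := hzero t
    simp only [Af, Bf]
    linear_combination (-(Rmat s a l j 1 1)) * h
  rw [lintegral_indicator measurableSet_Icc]
  have hgc : Continuous fun t : ℝ => Af s a l j (pp (l - t))
      - Bf s a l j (pp (l - t)) * pp (t - (a0 - l)) := by
    simp only [Af, Bf]
    exact (continuous_const.add (continuous_const.mul (cont_max_sub' l))).sub
      ((continuous_const.add (continuous_const.mul (cont_max_sub' l))).mul (cont_max_sub _))
  have hi : IntegrableOn (fun t : ℝ => Af s a l j (pp (l - t))
      - Bf s a l j (pp (l - t)) * pp (t - (a0 - l))) (Icc 0 a0) volume :=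
    hgc.integrableOn_Icc
  have hnn : 0 ≤ᵐ[volume.restrict (Icc (0:ℝ) a0)]
      (fun t : ℝ => Af s a l j (pp (l - t)) - Bf s a l j (pp (l - t)) * pp (t - (a0 - l))) := by
    refine (ae_restrict_iff' measurableSet_Icc).2 (ae_of_all _ fun t ht => ?_)
    have hr0 : 0 ≤ pp (l - t) := pp_nonneg _
    have hrl : pp (l - t) ≤ l := max_le (by linarith [ht.1]) hl
    obtain ⟨hB, hAB⟩ := pos_Bf_Af s a l hl h2 j (pp (l - t)) hr0 hrl
    have hql : pp (t - (a0 - l)) ≤ l := max_le (by linarith [ht.2]) hl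
    have hq0 : 0 ≤ pp (t - (a0 - l)) := pp_nonneg _
    have : (0:ℝ) ≤ Af s a l j (pp (l - t)) - Bf s a l j (pp (l - t)) * pp (t - (a0 - l)) := by
      nlinarith [mul_le_mul_of_nonneg_left hql hB]
    simpa using this
  rw [← ofReal_integral_eq_lintegral_ofReal hi hnn]
  congr 1
  have h0a : (0:ℝ) ≤ a0 := by linarith
  have hla : l ≤ a0 := by linarith
  rw [MeasureTheory.integral_Icc_eq_integral_Ioc, ← intervalIntegral.integral_of_le h0a]
  rw [intervalIntegral.integral_congr (g := fun t : ℝ => Rmat s a l j 0 0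
      + Rmat s a l j 0 1 * pp (l - t) - Rmat s a l j 1 0 * pp (t - (a0 - l)))
      (fun t _ => hg t)]
  rw [intervalIntegral.integral_sub
      (f := fun t : ℝ => Rmat s a l j 0 0 + Rmat s a l j 0 1 * pp (l - t))
      (g := fun t : ℝ => Rmat s a l j 1 0 * pp (t - (a0 - l)))
      (((intervalIntegrable_const).add
        ((continuous_const.mul (cont_max_sub' l)).intervalIntegrable _ _)))
      ((continuous_const.mul (cont_max_sub _)).intervalIntegrable _ _),
    intervalIntegral.integral_add (f := fun _ : ℝ => Rmat s a l j 0 0)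
      (g := fun t : ℝ => Rmat s a l j 0 1 * pp (l - t)) (intervalIntegrable_const)
      ((continuous_const.mul (cont_max_sub' l)).intervalIntegrable _ _),
    intervalIntegral.integral_const_mul, intervalIntegral.integral_const_mul,
    intervalIntegral.integral_const]
  have hJ1 : ∫ t in (0:ℝ)..a0, pp (l - t) = l^2/2 := lemJ2 hl hla
  have hJ2 : ∫ t in (0:ℝ)..a0, pp (t - (a0 - l)) = l^2/2 := by
    have h := lemJ (v := (0:ℝ)) (c := a0 - l) (e := l) (by linarith) hl
    rw [show a0 - l + l = a0 from by ring] at h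
    exact h
  rw [hJ1, hJ2]
  simp [smul_eq_mul]; ring

lemma meas_eF (i : Fin s) : Measurable (eF s a l i) := by
  unfold eF
  refine Measurable.ite ?_ measurable_const measurable_const
  simp only [Set.setOf_and]
  exact ((measurableSet_le measurable_const (measurable_pi_apply i)).inter
    ((measurableSet_le (measurable_pi_apply i) measurable_const).inter
      (measurableSet_le ((measurable_pi_apply i).sub (measurable_pi_apply (i+1)))
        measurable_const)))

lemma meas_fI : Measurable (fI s a l) :=
  Finset.measurable_prod _ fun i _ => meas_eF s a l i

lemma eF_ne_top (i : Fin s) (x : Fin s → ℝ) : eF s a l i x ≠ ⊤ := by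
  unfold eF; split <;> simp

lemma prod_eF_ne_top (S : Finset (Fin s)) (x : Fin s → ℝ) :
    (∏ i ∈ S, eF s a l i x) ≠ ⊤ :=
  (ENNReal.prod_lt_top fun i _ => (eF_ne_top s a l i x).lt_top).ne

lemma lmarg_zero (S : Finset (Fin s)) (j0 : Fin s) (hj : j0 ∉ S) (x : Fin s → ℝ)
    (hx : ¬(0 ≤ x j0 ∧ x j0 ≤ a j0)) :
    (∫⋯∫⁻_S, fI s a l) x = 0 := by
  have hf : ∀ y, fI s a l (updateFinset x S y) = 0 := by
    intro y
    apply Finset.prod_eq_zero (Finset.mem_univ j0)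
    have hx0 : updateFinset x S y j0 = x j0 := by
      simp [updateFinset, hj]
    rw [eF, hx0, if_neg]
    tauto
  unfold lmarginal
  simp [hf]

lemma fin_add_one_val (i : Fin s) : ((i + 1 : Fin s)).val = (i.val + 1) % s := by
  rw [Fin.val_add, Fin.val_one' s]
  conv_rhs => rw [Nat.add_mod]
  rw [Nat.mod_eq_of_lt i.isLt]

lemma eq_add_one {i : Fin s} (h : i.val + 1 < s) : (i + 1 : Fin s) = ⟨i.val + 1, h⟩ := by
  apply Fin.ext; rw [fin_add_one_val]; exact Nat.mod_eq_of_lt h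

lemma last_add_one (hs : 1 ≤ s) :
    ((⟨s-1, by omega⟩ : Fin s) + 1) = ⟨0, by omega⟩ := by
  apply Fin.ext; rw [fin_add_one_val]
  show (s - 1 + 1) % s = 0
  rw [Nat.sub_add_cancel hs, Nat.mod_self]

lemma inv_main (hs : 2 ≤ s) (hl : 0 ≤ l) (h2 : ∀ i, 2*l ≤ a i) :
    ∀ j : ℕ, j ≤ s - 2 → ∀ x : Fin s → ℝ, 0 ≤ x 0 → x 0 ≤ a 0 →
      ∀ hk : s - 2 - j < s,
      0 ≤ x ⟨s-2-j, hk⟩ → x ⟨s-2-j, hk⟩ ≤ a ⟨s-2-j, hk⟩ →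
      (∫⋯∫⁻_(Finset.Ioi (⟨s-2-j, hk⟩ : Fin s)), fI s a l) x
        = (∏ i ∈ Finset.Iio (⟨s-2-j, hk⟩ : Fin s), eF s a l i x) *
          ENNReal.ofReal (Af s a l j (pp (l - x 0))
            - Bf s a l j (pp (l - x 0)) * pp (x ⟨s-2-j, hk⟩ - (a ⟨s-2-j, hk⟩ - l))) := by
  intro j
  induction j with
  | zero =>
    intro hj x hx0 hx0' hk hxk hxk'
    set k : Fin s := ⟨s-2-0, hk⟩ with hkdef
    have hkval : k.val = s - 2 := by simp [hkdef]
    have hlt : s - 1 < s := by omega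
    set lst : Fin s := ⟨s-1, hlt⟩ with hlstdef
    have hlstval : lst.val = s - 1 := rfl
    have hIoi : Finset.Ioi k = {lst} := by
      ext i
      simp only [Finset.mem_Ioi, Finset.mem_singleton, Fin.lt_def, Fin.ext_iff, hkval, hlstval]
      have := i.isLt; omega
    rw [hIoi, lmarginal_singleton]
    beta_reduce
    have hklst : k ≠ lst := by simp only [ne_eq, Fin.ext_iff, hkval, hlstval]; omega
    have h0lst : (0 : Fin s) ≠ lst := by
      simp only [ne_eq, Fin.ext_iff, Fin.val_zero, hlstval]; omega
    have huniv : (Finset.univ : Finset (Fin s)) = insert lst (insert k (Finset.Iio k)) := by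
      ext i
      simp only [Finset.mem_univ, Finset.mem_insert, Finset.mem_Iio, Fin.lt_def, Fin.ext_iff,
        hkval, hlstval, true_iff]
      have := i.isLt; omega
    have hlstnot : lst ∉ insert k (Finset.Iio k) := by
      simp only [Finset.mem_insert, Finset.mem_Iio, Fin.lt_def, Fin.ext_iff, hkval, hlstval]
      push_neg
      exact ⟨by omega, by omega⟩
    have hknot : k ∉ Finset.Iio k := by simp
    have hkk1 : (k + 1 : Fin s) = lst := by
      rw [eq_add_one s (i := k) (by omega)]
      simp only [Fin.ext_iff, hkval, hlstval]; omega
    have hlst1 : (lst + 1 : Fin s) = (0 : Fin s) := by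
      rw [hlstdef, last_add_one s (by omega)]
      exact Fin.ext (by simp)
    have hdec : ∀ t : ℝ, fI s a l (Function.update x lst t)
        = ((∏ i ∈ Finset.Iio k, eF s a l i x) : ℝ≥0∞)
          * ((if 0 ≤ t ∧ t ≤ a lst ∧ t - x 0 ≤ a lst - l then (1:ℝ≥0∞) else 0)
            * (if x k - t ≤ a k - l then (1:ℝ≥0∞) else 0)) := by
      intro t
      rw [fI, huniv, Finset.prod_insert hlstnot, Finset.prod_insert hknot]
      have e1 : Function.update x lst t lst = t := Function.update_self _ _ _
      have e3 : Function.update x lst t 0 = x 0 := Function.update_of_ne h0lst _ _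
      have e4 : Function.update x lst t k = x k := Function.update_of_ne hklst _ _
      have heL : eF s a l lst (Function.update x lst t)
          = if 0 ≤ t ∧ t ≤ a lst ∧ t - x 0 ≤ a lst - l then (1:ℝ≥0∞) else 0 := by
        rw [eF, hlst1, e1, e3]
      have heK : eF s a l k (Function.update x lst t)
          = if x k - t ≤ a k - l then (1:ℝ≥0∞) else 0 := by
        rw [eF, hkk1, e1, e4]
        exact if_congr (by tauto) rfl rfl
      have hpre : ∀ i ∈ Finset.Iio k, eF s a l i (Function.update x lst t) = eF s a l i x := by
        intro i hi
        have hival : i.val < s - 2 := by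
          simpa only [Finset.mem_Iio, Fin.lt_def, hkval] using hi
        have hi1 : (i + 1 : Fin s) = ⟨i.val + 1, by omega⟩ := eq_add_one s (by omega)
        have hilst : i ≠ lst := by simp only [ne_eq, Fin.ext_iff, hlstval]; omega
        have hi1lst : (⟨i.val + 1, by omega⟩ : Fin s) ≠ lst := by
          simp only [ne_eq, Fin.ext_iff, hlstval]; omega
        rw [eF, eF, hi1, Function.update_of_ne hilst, Function.update_of_ne hi1lst]
      rw [heL, heK, Finset.prod_congr rfl hpre]
      ring
    rw [lintegral_congr hdec, lintegral_const_mul' _ _ (prod_eF_ne_top s a l _ x)]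
    congr 1
    have hpt : ∀ t : ℝ, ((if 0 ≤ t ∧ t ≤ a lst ∧ t - x 0 ≤ a lst - l then (1:ℝ≥0∞) else 0)
            * (if x k - t ≤ a k - l then (1:ℝ≥0∞) else 0))
        = Set.indicator (Icc (pp (x k - (a k - l))) (min (a lst) (x 0 + (a lst - l))))
            (fun _ => (1:ℝ≥0∞)) t := by
      intro t
      rw [Set.indicator_apply]
      by_cases hmem : t ∈ Icc (pp (x k - (a k - l))) (min (a lst) (x 0 + (a lst - l)))
      · have hm := hmem
        simp only [mem_Icc, pp, max_le_iff, le_min_iff] at hm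
        rw [if_pos hmem, if_pos (show 0 ≤ t ∧ t ≤ a lst ∧ t - x 0 ≤ a lst - l from
          ⟨hm.1.2, hm.2.1, by linarith [hm.2.2]⟩),
          if_pos (show x k - t ≤ a k - l by linarith [hm.1.1]), one_mul]
      · rw [if_neg hmem]
        simp only [mem_Icc, pp, max_le_iff, le_min_iff] at hmem
        push_neg at hmem
        by_cases h1 : 0 ≤ t ∧ t ≤ a lst ∧ t - x 0 ≤ a lst - l
        · rw [if_pos h1, if_neg, mul_zero]
          intro hc
          exact absurd (hmem ⟨by linarith, h1.1⟩ h1.2.1) (by push_neg; linarith [h1.2.2])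
        · rw [if_neg h1, zero_mul]
    rw [lintegral_congr hpt]
    rw [show (fun _ : ℝ => (1:ℝ≥0∞)) = (1 : ℝ → ℝ≥0∞) from rfl]
    rw [lintegral_indicator_one measurableSet_Icc, Real.volume_Icc]
    congr 1
    rw [Af_zero, Bf_zero, fin'_eq s (show s - 1 < s by omega)]
    have hmin : min (a lst) (x 0 + (a lst - l)) = a lst - pp (l - x 0) := by
      rcases le_total (l - x 0) 0 with h | h
      · rw [pp_of_nonpos h, min_eq_left (by linarith)]; ring
      · rw [pp, max_eq_left h, min_eq_right (by linarith)]; ring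
    rw [hmin]
    show a lst - pp (l - x 0) - pp (x k - (a k - l))
      = a ⟨s-1, hlt⟩ - pp (l - x 0) - 1 * pp (x k - (a k - l))
    ring
  | succ j ih =>
    intro hj x hx0 hx0' hk hxk hxk'
    have hk1lt : s - 2 - j < s := by omega
    set k : Fin s := ⟨s-2-(j+1), hk⟩ with hkdef
    set k1 : Fin s := ⟨s-2-j, hk1lt⟩ with hk1def
    have hkval : k.val = s - 2 - (j+1) := rfl
    have hk1val : k1.val = s - 2 - j := rfl
    have hkk1 : (k + 1 : Fin s) = k1 := by
      rw [eq_add_one s (i := k) (by omega)]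
      apply Fin.ext
      show s - 2 - (j+1) + 1 = s - 2 - j
      omega
    have hIoi : Finset.Ioi k = insert k1 (Finset.Ioi k1) := by
      ext i
      simp only [Finset.mem_Ioi, Finset.mem_insert, Fin.lt_def, Fin.ext_iff, hkval, hk1val]
      omega
    have hk1not : k1 ∉ Finset.Ioi k1 := by simp
    rw [hIoi, lmarginal_insert _ (meas_fI s a l) hk1not]
    have hk10 : (0 : Fin s) ≠ k1 := by
      simp only [ne_eq, Fin.ext_iff, hk1val, Fin.val_zero]; omega
    have hkk1ne : k ≠ k1 := by
      simp only [ne_eq, Fin.ext_iff, hk1val, hkval]; omega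
    have hIio : Finset.Iio k1 = insert k (Finset.Iio k) := by
      ext i
      simp only [Finset.mem_Iio, Finset.mem_insert, Fin.lt_def, Fin.ext_iff, hkval, hk1val]
      omega
    have hknot : k ∉ Finset.Iio k := by simp
    have hfin : fin' s (s-2-j) = k1 := by
      apply Fin.ext
      show (s-2-j) % s = s-2-j
      exact Nat.mod_eq_of_lt hk1lt
    have hr00 : 0 ≤ pp (l - x 0) := pp_nonneg _
    have hr0l : pp (l - x 0) ≤ l := max_le (by linarith) hl
    obtain ⟨hB, hAB⟩ := pos_Bf_Af s a l hl h2 j (pp (l - x 0)) hr00 hr0l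
    have hvle : x k - (a k - l) ≤ l := by linarith
    have hint : ∀ t : ℝ, (∫⋯∫⁻_(Finset.Ioi k1), fI s a l) (Function.update x k1 t)
        = ((∏ i ∈ Finset.Iio k, eF s a l i x) : ℝ≥0∞)
          * ((Set.indicator (Icc (0:ℝ) (a k1))
              (fun u => ENNReal.ofReal (Af s a l j (pp (l - x 0))
                - Bf s a l j (pp (l - x 0)) * pp (u - (a k1 - l)))) t)
            * (if x k - (a k - l) ≤ t then 1 else 0)) := by
      intro t
      have e0 : Function.update x k1 t 0 = x 0 := Function.update_of_ne hk10 _ _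
      have ek1 : Function.update x k1 t k1 = t := Function.update_self _ _ _
      have ek : Function.update x k1 t k = x k := Function.update_of_ne hkk1ne _ _
      by_cases ht : t ∈ Icc (0:ℝ) (a k1)
      · have ihx := ih (by omega) (Function.update x k1 t) (by rw [e0]; exact hx0)
          (by rw [e0]; exact hx0') hk1lt
          (by rw [show (⟨s-2-j, hk1lt⟩ : Fin s) = k1 from rfl, ek1]; exact ht.1)
          (by rw [show (⟨s-2-j, hk1lt⟩ : Fin s) = k1 from rfl, ek1]; exact ht.2)
        rw [show (⟨s-2-j, hk1lt⟩ : Fin s) = k1 from rfl] at ihx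
        rw [e0, ek1] at ihx
        rw [ihx, hIio, Finset.prod_insert hknot]
        have hpre : ∀ i ∈ Finset.Iio k, eF s a l i (Function.update x k1 t) = eF s a l i x := by
          intro i hi
          have hival : i.val < s - 2 - (j+1) := by
            simpa only [Finset.mem_Iio, Fin.lt_def, hkval] using hi
          have hi1 : (i + 1 : Fin s) = ⟨i.val + 1, by omega⟩ := eq_add_one s (by omega)
          have hik1 : i ≠ k1 := by simp only [ne_eq, Fin.ext_iff, hk1val]; omega
          have hi1k1 : (⟨i.val + 1, by omega⟩ : Fin s) ≠ k1 := by
            simp only [ne_eq, Fin.ext_iff, hk1val]; omega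
          rw [eF, eF, hi1, Function.update_of_ne hik1, Function.update_of_ne hi1k1]
        have heK : eF s a l k (Function.update x k1 t)
            = if x k - (a k - l) ≤ t then (1:ℝ≥0∞) else 0 := by
          rw [eF, hkk1, ek, ek1]
          refine if_congr ?_ rfl rfl
          constructor
          · intro h; linarith [h.2.2]
          · intro h; exact ⟨hxk, hxk', by linarith⟩
        rw [Finset.prod_congr rfl hpre, heK, Set.indicator_of_mem ht]
        ring
      · rw [lmarg_zero s a l _ k1 hk1not _ (by rw [ek1]; simpa [mem_Icc] using ht),
          Set.indicator_of_notMem ht]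
        simp
    rw [lintegral_congr hint, lintegral_const_mul' _ _ (prod_eF_ne_top s a l _ x)]
    rw [core hl (h2 k1) hB hAB hvle]
    congr 1
    rw [Af_succ, Bf_succ, hfin]
    ring


/-- transfer matrix with natural index -/
def Mn (m : ℕ) : Matrix (Fin 2) (Fin 2) ℝ := !![a (fin' s m), -(l^2/2); 1, 0]

lemma Rmat_succ_eq (j : ℕ) : Rmat s a l (j+1) = Mn s a l (s-2-j) * Rmat s a l j := rfl

lemma Rmat_eq_prod : ∀ j, j ≤ s - 2 →
    Rmat s a l j = ((List.range j).map (fun i => Mn s a l (s-1-j+i))).prod * Rmat s a l 0 := by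
  intro j
  induction j with
  | zero => intro _; simp
  | succ j ih =>
    intro hj
    rw [Rmat_succ_eq, ih (by omega)]
    have h1 : (fun i => Mn s a l (s-1-(j+1)+i)) ∘ Nat.succ = fun i => Mn s a l (s-1-j+i) := by
      funext i
      show Mn s a l (s-1-(j+1)+Nat.succ i) = Mn s a l (s-1-j+i)
      rw [show s-1-(j+1)+Nat.succ i = s-1-j+i from by omega]
    conv_rhs => rw [List.range_succ_eq_map, List.map_cons, List.map_map, List.prod_cons]
    rw [h1, mul_assoc, show s-1-(j+1)+0 = s-2-j from by omega]

lemma ofFn_eq_rangeMap :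
    (List.ofFn fun i : Fin s => (!![a i, -(l ^ 2) / 2; 1, 0] : Matrix (Fin 2) (Fin 2) ℝ))
      = (List.range s).map (Mn s a l) := by
  rw [List.ofFn_eq_map, ← List.map_coe_finRange_eq_range, List.map_map]
  apply List.map_congr_left
  intro i _
  have hfi : fin' s i.val = i := Fin.ext (Nat.mod_eq_of_lt i.isLt)
  simp only [Function.comp_apply, Mn, hfi, neg_div]

lemma range_split (hs : 2 ≤ s) : (List.range s).map (Mn s a l)
    = Mn s a l 0 :: (((List.range (s-2)).map (fun i => Mn s a l (1+i))) ++ [Mn s a l (s-1)]) := by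
  have hr1 : List.range s = List.range (s-1) ++ [s-1] := by
    conv_lhs => rw [show s = (s-1)+1 from by omega, List.range_succ]
  have hr2 : List.range (s-1) = 0 :: (List.range (s-2)).map Nat.succ := by
    conv_lhs => rw [show s-1 = (s-2)+1 from by omega, List.range_succ_eq_map]
  have h1 : Mn s a l ∘ Nat.succ = fun i => Mn s a l (1+i) := by
    funext i
    show Mn s a l (Nat.succ i) = Mn s a l (1+i)
    rw [show Nat.succ i = 1+i from by omega]
  rw [hr1, hr2, List.map_append, List.map_cons, List.map_map, h1]
  rfl

lemma tr22 (P : Matrix (Fin 2) (Fin 2) ℝ) (A B H : ℝ) :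
    Matrix.trace (!![A, -H; 1, 0] * (P * !![B, -H; 1, 0]))
      = A * ((P * !![B, -1; 1, 0]) 0 0) + H * ((P * !![B, -1; 1, 0]) 0 1)
        - H * ((P * !![B, -1; 1, 0]) 1 0) := by
  rw [Matrix.eta_fin_two P]
  simp [Matrix.trace_fin_two, Matrix.mul_fin_two]
  ring

lemma trace_eq (hs : 2 ≤ s) :
    Matrix.trace (List.ofFn fun i : Fin s =>
        (!![a i, -(l ^ 2) / 2; 1, 0] : Matrix (Fin 2) (Fin 2) ℝ)).prod
      = a 0 * Rmat s a l (s-2) 0 0 + (l^2/2) * Rmat s a l (s-2) 0 1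
        - (l^2/2) * Rmat s a l (s-2) 1 0 := by
  rw [ofFn_eq_rangeMap, range_split s a l hs, List.prod_cons, List.prod_append,
    List.prod_singleton]
  rw [Rmat_eq_prod s a l (s-2) le_rfl]
  have hidx : (fun i => Mn s a l (s-1-(s-2)+i)) = (fun i => Mn s a l (1+i)) := by
    funext i
    rw [show s-1-(s-2)+i = 1+i from by omega]
  rw [hidx]
  have hfin0 : fin' s 0 = 0 := Fin.ext (by simp [fin'])
  have hM0 : Mn s a l 0 = !![a 0, -(l^2/2); 1, 0] := by rw [Mn, hfin0]
  have hMlast : Mn s a l (s-1) = !![a (fin' s (s-1)), -(l^2/2); 1, 0] := rfl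
  have hB : Rmat s a l 0 = !![a (fin' s (s-1)), -1; 1, 0] := rfl
  rw [hM0, hMlast, hB]
  exact tr22 _ (a 0) (a (fin' s (s-1))) (l^2/2)


end CLaux
end CLauxSec

/-- The chainlink polytope `CL(ā,l) ⊆ ℝ^s` (indices taken cyclically). -/
def chainlink (s : ℕ) [NeZero s] (a : Fin s → ℝ) (l : ℝ) : Set (Fin s → ℝ) :=
  {x | (∀ i, 0 ≤ x i ∧ x i ≤ a i) ∧ ∀ i, x i - x (i + 1) ≤ a i - l}

/-- the Lebesgue volume of the chainlink polytope equals
`tr(M₁ ⋯ M_s)` where `Mᵢ = [[aᵢ, −l²/2],[1,0]]`, provided `2l ≤ aᵢ` for all `i`. -/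
theorem chainlink_volume
    (s : ℕ) [NeZero s] (a : Fin s → ℝ) (ha : ∀ i, 0 < a i)
    (l : ℝ) (hl : 0 ≤ l) (h2l : ∀ i, 2 * l ≤ a i) :
    MeasureTheory.volume (chainlink s a l) =
      ENNReal.ofReal
        (Matrix.trace (List.ofFn fun i : Fin s =>
          (!![a i, -(l ^ 2) / 2; 1, 0] : Matrix (Fin 2) (Fin 2) ℝ)).prod) := by
  classical
  open CLaux in
  rcases le_or_gt 2 s with hs | hs1
  · -- main case s ≥ 2
    have hmeas : MeasurableSet (chainlink s a l) := by
      unfold chainlink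
      rw [Set.setOf_and]
      apply MeasurableSet.inter
      · rw [Set.setOf_forall]
        exact MeasurableSet.iInter fun i => by
          rw [Set.setOf_and]
          exact (measurableSet_le measurable_const (measurable_pi_apply i)).inter
            (measurableSet_le (measurable_pi_apply i) measurable_const)
      · rw [Set.setOf_forall]
        exact MeasurableSet.iInter fun i =>
          measurableSet_le ((measurable_pi_apply i).sub (measurable_pi_apply (i+1)))
            measurable_const
    have hind : ∀ x, (chainlink s a l).indicator (1 : (Fin s → ℝ) → ℝ≥0∞) x
        = CLaux.fI s a l x := by
      intro x
      by_cases hx : x ∈ chainlink s a l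
      · rw [Set.indicator_of_mem hx, CLaux.fI, Finset.prod_eq_one, Pi.one_apply]
        intro i _
        exact if_pos ⟨(hx.1 i).1, (hx.1 i).2, hx.2 i⟩
      · rw [Set.indicator_of_notMem hx]
        symm
        rcases not_and_or.mp hx with h | h
        · obtain ⟨i, hi⟩ := not_forall.mp h
          refine Finset.prod_eq_zero (Finset.mem_univ i) ?_
          rw [CLaux.eF, if_neg]
          tauto
        · obtain ⟨i, hi⟩ := not_forall.mp h
          refine Finset.prod_eq_zero (Finset.mem_univ i) ?_
          rw [CLaux.eF, if_neg]
          tauto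
    rw [← MeasureTheory.lintegral_indicator_one hmeas, lintegral_congr hind,
      MeasureTheory.volume_pi,
      lintegral_eq_lmarginal_univ (f := CLaux.fI s a l) (fun _ : Fin s => (0:ℝ))]
    have huniv : (Finset.univ : Finset (Fin s)) = insert 0 (Finset.Ioi (0 : Fin s)) := by
      ext i
      simp only [Finset.mem_univ, Finset.mem_insert, Finset.mem_Ioi, Fin.lt_def, Fin.ext_iff,
        Fin.val_zero, true_iff]
      omega
    rw [huniv, lmarginal_insert _ (CLaux.meas_fI s a l) (by simp)]
    have hk : s - 2 - (s-2) < s := by omega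
    have h00 : (⟨s-2-(s-2), hk⟩ : Fin s) = 0 := Fin.ext (by show s-2-(s-2) = 0; omega)
    have hIio0 : Finset.Iio (0 : Fin s) = ∅ := by
      ext i
      simp [Finset.mem_Iio]
    have hintg : ∀ t : ℝ,
        (∫⋯∫⁻_(Finset.Ioi (0 : Fin s)), CLaux.fI s a l)
            (Function.update (fun _ : Fin s => (0:ℝ)) 0 t)
        = Set.indicator (Set.Icc (0:ℝ) (a 0))
            (fun u => ENNReal.ofReal (CLaux.Af s a l (s-2) (CLaux.pp (l - u))
              - CLaux.Bf s a l (s-2) (CLaux.pp (l - u)) * CLaux.pp (u - (a 0 - l)))) t := by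
      intro t
      have e0 : Function.update (fun _ : Fin s => (0:ℝ)) 0 t 0 = t :=
        Function.update_self _ _ _
      by_cases ht : t ∈ Set.Icc (0:ℝ) (a 0)
      · have key := CLaux.inv_main s a l hs hl h2l (s-2) le_rfl
          (Function.update (fun _ : Fin s => (0:ℝ)) 0 t)
          (by rw [e0]; exact ht.1) (by rw [e0]; exact ht.2) hk
          (by rw [h00, e0]; exact ht.1) (by rw [h00, e0]; exact ht.2)
        rw [h00] at key
        rw [key, e0, hIio0, Finset.prod_empty, one_mul, Set.indicator_of_mem ht]
      · rw [CLaux.lmarg_zero s a l _ 0 (by simp) _ (by rw [e0]; simpa [Set.mem_Icc] using ht),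
          Set.indicator_of_notMem ht]
    rw [lintegral_congr hintg, CLaux.fcore s a l hl h2l (s-2) (h2l 0),
      CLaux.trace_eq s a l hs]
  · -- case s = 1
    have hs1' : s = 1 := by have := CLaux.s_pos s; omega
    subst hs1'
    have hset : chainlink 1 a l = Set.pi Set.univ (fun i => Set.Icc 0 (a i)) := by
      ext x
      simp only [chainlink, Set.mem_setOf_eq, Set.mem_pi, Set.mem_univ, true_implies,
        Set.mem_Icc]
      constructor
      · exact fun h => h.1
      · intro h
        refine ⟨h, fun i => ?_⟩
        have hii : (i + 1 : Fin 1) = i := Subsingleton.elim _ _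
        rw [hii]
        have := h2l i
        linarith
    rw [hset, MeasureTheory.volume_pi_pi]
    have h1 : (List.ofFn fun i : Fin 1 =>
        (!![a i, -(l ^ 2) / 2; 1, 0] : Matrix (Fin 2) (Fin 2) ℝ)).prod
        = !![a 0, -(l ^ 2) / 2; 1, 0] := by
      simp [List.ofFn_succ]
    rw [h1]
    have h2 : Matrix.trace (!![a 0, -(l ^ 2) / 2; 1, 0] : Matrix (Fin 2) (Fin 2) ℝ)
        = a 0 := by
      simp [Matrix.trace_fin_two]
    rw [h2]
    simp [Real.volume_Icc]
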